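/- Local asymptotic stability of the endemic equilibrium via the Jacobian: assume A is symmetric and irreducible, ν > 0, and let I* ∈ ℝ^ℓ with 0 < I*_j < 1/ℓ for all j satisfy (νD − 𝔸 + B) I* = ℓ·diag(I*) B I*. Then the Jacobian J = νD − 𝔸 + B − ℓ·diag(I*)B − ℓ·diag(B I*) of the reduced vector field at I* satisfies J I* = −ℓ·diag(B I*) I*, whose components are all strictly negative, and consequently the stability modulus satisfies α(J) < 0. -/

import Mathlib

open Finset Filter Topology

/-- The connectivity matrix `A` is irreducible. -/
def IrreducibleMat (ℓ : ℕ) (A : Matrix (Fin ℓ) (Fin ℓ) ℝ) : Prop :=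
  ∀ j k : Fin ℓ, j ≠ k → ∃ s : ℕ, 2 ≤ s ∧ ∃ c : ℕ → Fin ℓ,
    c 0 = j ∧ c (s - 1) = k ∧ ∀ i, i < s - 1 → A (c i) (c (i + 1)) ≠ 0

/-- Local asymptotic stability of the endemic equilibrium via the Jacobian: with
`J = νD − 𝔸 + B − ℓ·diag(I*)B − ℓ·diag(B I*)` one has `J I* = −ℓ·diag(B I*) I*`, whose
components are all strictly negative, and the stability modulus of `J` is negative
(every eigenvalue of `J` has negative real part). -/
theorem endemic_equilibrium_locally_asymptotically_stable
    (ℓ : ℕ) (hℓ : 1 ≤ ℓ)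
    (lam gam : Fin ℓ → ℝ) (hlam : ∀ j, 0 < lam j) (hgam : ∀ j, 0 < gam j)
    (ν : ℝ) (hν : 0 < ν)
    (A : Matrix (Fin ℓ) (Fin ℓ) ℝ) (hA : ∀ j k, 0 ≤ A j k) (hAdiag : ∀ j, A j j = 0)
    (hsym : A.IsSymm) (hirr : IrreducibleMat ℓ A)
    (D : Matrix (Fin ℓ) (Fin ℓ) ℝ)
    (hD : ∀ j k, D j k = if j = k then -∑ i ∈ univ.erase j, A j i else A j k)
    (Istar : Fin ℓ → ℝ) (hIpos : ∀ j, 0 < Istar j ∧ Istar j < (ℓ : ℝ)⁻¹)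
    (hEq : (ν • D - Matrix.diagonal gam + Matrix.diagonal lam).mulVec Istar
      = (ℓ : ℝ) • (Matrix.diagonal Istar * Matrix.diagonal lam).mulVec Istar)
    (J : Matrix (Fin ℓ) (Fin ℓ) ℝ)
    (hJ : J = ν • D - Matrix.diagonal gam + Matrix.diagonal lam
      - (ℓ : ℝ) • (Matrix.diagonal Istar * Matrix.diagonal lam)
      - (ℓ : ℝ) • Matrix.diagonal ((Matrix.diagonal lam).mulVec Istar)) :
    J.mulVec Istar
      = -((ℓ : ℝ) • (Matrix.diagonal ((Matrix.diagonal lam).mulVec Istar)).mulVec Istar) ∧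
    (∀ j, (J.mulVec Istar) j < 0) ∧
    (∀ δ ∈ spectrum ℂ (J.map (Complex.ofReal ·)), δ.re < 0) := by
  have hIpos' : ∀ j, 0 < Istar j := fun j => (hIpos j).1
  have hℓpos : (0 : ℝ) < (ℓ : ℝ) := by exact_mod_cast hℓ
  -- Part 1
  have key : J.mulVec Istar
      = -((ℓ : ℝ) • (Matrix.diagonal ((Matrix.diagonal lam).mulVec Istar)).mulVec Istar) := by
    rw [hJ, Matrix.sub_mulVec, Matrix.sub_mulVec, hEq, Matrix.smul_mulVec,
      Matrix.smul_mulVec]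
    abel
  -- Part 2
  have hneg : ∀ j, (J.mulVec Istar) j < 0 := by
    intro j
    rw [key]
    simp only [Pi.neg_apply, Pi.smul_apply, Matrix.mulVec_diagonal, smul_eq_mul]
    have h1 : 0 < lam j * Istar j * Istar j :=
      mul_pos (mul_pos (hlam j) (hIpos' j)) (hIpos' j)
    nlinarith [mul_pos hℓpos h1]
  refine ⟨key, hneg, ?_⟩
  -- Part 3
  intro δ hδ
  -- off-diagonal entries of J are nonnegative
  have hJoff : ∀ j k, j ≠ k → 0 ≤ J j k := by
    intro j k hjk
    have : J j k = ν * A j k := by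
      simp [hJ, Matrix.sub_apply, Matrix.add_apply, Matrix.smul_apply,
        Matrix.diagonal_mul_diagonal, Matrix.diagonal_apply_ne _ hjk, hD j k, hjk,
        smul_eq_mul]
    rw [this]
    exact mul_nonneg hν.le (hA j k)
  set c : Fin ℓ → ℂ := fun j => (Istar j : ℂ) with hc
  have hc0 : ∀ j, c j ≠ 0 := fun j => by
    simp [hc, Complex.ofReal_ne_zero, (hIpos' j).ne']
  -- the diagonal unit
  have hmul1 : Matrix.diagonal c * Matrix.diagonal (fun j => (c j)⁻¹) = 1 := by
    rw [Matrix.diagonal_mul_diagonal]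
    rw [show (fun j => c j * (c j)⁻¹) = fun _ => (1 : ℂ) from
      funext fun j => mul_inv_cancel₀ (hc0 j)]
    exact Matrix.diagonal_one
  have hmul2 : Matrix.diagonal (fun j => (c j)⁻¹) * Matrix.diagonal c = 1 := by
    rw [Matrix.diagonal_mul_diagonal]
    rw [show (fun j => (c j)⁻¹ * c j) = fun _ => (1 : ℂ) from
      funext fun j => inv_mul_cancel₀ (hc0 j)]
    exact Matrix.diagonal_one
  set u : (Matrix (Fin ℓ) (Fin ℓ) ℂ)ˣ :=
    ⟨Matrix.diagonal c, Matrix.diagonal (fun j => (c j)⁻¹), hmul1, hmul2⟩ with hu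
  set Jc : Matrix (Fin ℓ) (Fin ℓ) ℂ := J.map (Complex.ofReal ·) with hJc
  set M : Matrix (Fin ℓ) (Fin ℓ) ℂ :=
    (↑u⁻¹ : Matrix (Fin ℓ) (Fin ℓ) ℂ) * Jc * (↑u : Matrix (Fin ℓ) (Fin ℓ) ℂ) with hM
  have hδM : δ ∈ spectrum ℂ M := by
    rw [hM, spectrum.units_conjugate']
    exact hδ
  have hMeq : M = Matrix.diagonal (fun j => (c j)⁻¹) * Jc * Matrix.diagonal c := rfl
  have hMentry : ∀ j k, M j k = (c j)⁻¹ * (J j k : ℂ) * c k := by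
    intro j k
    rw [hMeq, Matrix.mul_diagonal, Matrix.diagonal_mul]
    rfl
  -- eigenvalue via Gershgorin
  have heig : Module.End.HasEigenvalue (Matrix.toLin' M) δ := by
    have h2 : Matrix.toLinAlgEquiv' M = Matrix.toLin' M := rfl
    rw [Module.End.hasEigenvalue_iff_mem_spectrum, ← h2, AlgEquiv.spectrum_eq]
    exact hδM
  obtain ⟨k, hk⟩ := eigenvalue_mem_ball heig
  rw [Metric.mem_closedBall, Complex.dist_eq] at hk
  have hMkk : M k k = (J k k : ℂ) := by
    rw [hMentry k k, mul_comm ((c k)⁻¹) _, mul_assoc, inv_mul_cancel₀ (hc0 k), mul_one]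
  -- compute the Gershgorin radius
  have hnorm : ∀ j, j ≠ k → ‖M k j‖ = (Istar k)⁻¹ * (J k j * Istar j) := by
    intro j hj
    rw [hMentry k j, hc]
    rw [show ((Istar k : ℂ))⁻¹ * (J k j : ℂ) * (Istar j : ℂ)
        = (((Istar k)⁻¹ * (J k j * Istar j) : ℝ) : ℂ) by push_cast; ring]
    rw [Complex.norm_real, Real.norm_eq_abs, abs_of_nonneg]
    exact mul_nonneg (inv_nonneg.mpr (hIpos' k).le)
      (mul_nonneg (hJoff k j (Ne.symm hj)) (hIpos' j).le)
  have hsum : ∑ j ∈ univ.erase k, ‖M k j‖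
      = (Istar k)⁻¹ * ((J.mulVec Istar) k - J k k * Istar k) := by
    rw [Finset.sum_congr rfl (fun j hj => hnorm j (Finset.ne_of_mem_erase hj)),
      ← Finset.mul_sum, Finset.sum_erase_eq_sub (Finset.mem_univ k)]
    have hmv : (J.mulVec Istar) k = ∑ j, J k j * Istar j := rfl
    rw [hmv]
  have hre : δ.re - J k k ≤ ‖δ - M k k‖ := by
    calc δ.re - J k k = (δ - M k k).re := by rw [hMkk]; simp
      _ ≤ ‖δ - M k k‖ := Complex.re_le_norm _
  have hfin : δ.re ≤ (Istar k)⁻¹ * (J.mulVec Istar) k := by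
    have := hre.trans (hk.trans_eq hsum)
    have hcancel : (Istar k)⁻¹ * ((J.mulVec Istar) k - J k k * Istar k)
        = (Istar k)⁻¹ * (J.mulVec Istar) k - J k k := by
      rw [mul_sub, mul_comm (J k k) (Istar k), ← mul_assoc,
        inv_mul_cancel₀ (hIpos' k).ne', one_mul]
    linarith [hcancel ▸ this]
  have : (Istar k)⁻¹ * (J.mulVec Istar) k < 0 :=
    mul_neg_of_pos_of_neg (inv_pos.mpr (hIpos' k)) (hneg k)
  linarith
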